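/- In a finite orthomodular poset with connectives x ⊙ y := Min U(x, y') ∧ y and x → y := x' ∨ Max L(x, y), for all elements p, q we have p ≤₁ q → (p ⊙ q), i.e., for every element r of the set q → (p ⊙ q) we have p ≤ r. In fact q → (p ⊙ q) = Min U(p, q'). -/

import Mathlib

section
variable (A : Type*)

/-- Set of minimal upper bounds. -/
def MinU [PartialOrder A] (S : Set A) : Set A := {a | Minimal (· ∈ upperBounds S) a}

/-- Set of maximal lower bounds. -/
def MaxL [PartialOrder A] (S : Set A) : Set A := {a | Maximal (· ∈ lowerBounds S) a}

/-- An orthomodular poset: a bounded poset with an antitone involution that is a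
complementation, such that orthogonal elements have a join and the orthomodular law holds. -/
structure OMP [PartialOrder A] [BoundedOrder A] where
  compl : A → A
  compl_antitone : ∀ a b : A, a ≤ b → compl b ≤ compl a
  compl_involutive : ∀ a : A, compl (compl a) = a
  sup_compl : ∀ a : A, IsLUB {a, compl a} ⊤
  inf_compl : ∀ a : A, IsGLB {a, compl a} ⊥
  ortho_sup : ∀ a b : A, a ≤ compl b → ∃ c, IsLUB {a, b} c
  oml : ∀ a b m : A, a ≤ b → IsGLB {b, compl a} m → IsLUB {a, m} b

end

section
variable {A : Type*} [PartialOrder A] [BoundedOrder A]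

/-- The inexact conjunction `a ⊙ b := Min U(a, b') ∧ b` (a set of elements). -/
def odot (M : OMP A) (a b : A) : Set A :=
  {x | ∃ m ∈ MinU A {a, M.compl b}, IsGLB {m, b} x}

/-- The inexact implication `a → b := a' ∨ Max L(a, b)` (a set of elements). -/
def arrow (M : OMP A) (a b : A) : Set A :=
  {x | ∃ m ∈ MaxL A {a, b}, IsLUB {M.compl a, m} x}

/-- Extension of `⊙` to nonempty subsets. -/
def odotS (M : OMP A) (B C : Set A) : Set A := ⋃ b ∈ B, ⋃ c ∈ C, odot M b c

/-- Extension of `→` to nonempty subsets. -/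
def arrowS (M : OMP A) (B C : Set A) : Set A := ⋃ b ∈ B, ⋃ c ∈ C, arrow M b c

/-- `B ≤₁ C`: every element of `B` is below some element of `C`. -/
def le1 (B C : Set A) : Prop := ∀ b ∈ B, ∃ c ∈ C, b ≤ c

/-- `B ≤₂ C`: every element of `C` is above some element of `B`. -/
def le2 (B C : Set A) : Prop := ∀ c ∈ C, ∃ b ∈ B, b ≤ c

end

/-- For all elements `p, q` of a finite orthomodular poset, `q → (p ⊙ q) = Min U(p, q')`;
in particular `p` is below every element of `q → (p ⊙ q)`, hence `p ≤₁ q → (p ⊙ q)`. -/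
theorem stmt_3 {A : Type*} [PartialOrder A] [BoundedOrder A] [Finite A] (M : OMP A)
    (p q : A) :
    arrowS M {q} (odot M p q) = MinU A {p, M.compl q} ∧
    (∀ r ∈ arrowS M {q} (odot M p q), p ≤ r) ∧
    le1 {p} (arrowS M {q} (odot M p q)) := by
  have key : arrowS M {q} (odot M p q) = MinU A {p, M.compl q} := by
    ext r
    simp only [arrowS, arrow, Set.mem_iUnion, Set.mem_singleton_iff, exists_prop,
      Set.mem_setOf_eq]
    constructor
    · rintro ⟨b, hb, x, hx, s, hs, hlub⟩
      obtain rfl := hb.symm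
      obtain ⟨m, hm, hglb⟩ := hx
      have hxq : x ≤ q := hglb.1 (Set.mem_insert_of_mem _ rfl)
      have hxlb : x ∈ lowerBounds ({q, x} : Set A) := by
        rintro y (rfl | rfl)
        · exact hxq
        · exact le_refl _
      have hsx : s = x := le_antisymm (hs.1 (Set.mem_insert_of_mem _ rfl))
        (hs.2 hxlb (hs.1 (Set.mem_insert_of_mem _ rfl)))
      subst hsx
      have hq'm : M.compl q ≤ m := hm.1 (Set.mem_insert_of_mem _ rfl)
      have hglb' : IsGLB {m, M.compl (M.compl q)} s := by
        rw [M.compl_involutive]; exact hglb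
      have hlub2 := M.oml (M.compl q) m s hq'm hglb'
      have hrm : r = m := hlub.unique hlub2
      rw [hrm]
      exact hm
    · intro hr
      have hq'r : M.compl q ≤ r := hr.1 (Set.mem_insert_of_mem _ rfl)
      have hr'q : M.compl r ≤ M.compl (M.compl q) := M.compl_antitone _ _ hq'r
      obtain ⟨c, hc⟩ := M.ortho_sup (M.compl r) (M.compl q) hr'q
      have hglb : IsGLB ({r, q} : Set A) (M.compl c) := by
        constructor
        · rintro y (rfl | rfl)
          · have h1 : M.compl y ≤ c := hc.1 (Set.mem_insert _ _)
            have h2 := M.compl_antitone _ _ h1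
            rwa [M.compl_involutive] at h2
          · have h1 : M.compl y ≤ c := hc.1 (Set.mem_insert_of_mem _ rfl)
            have h2 := M.compl_antitone _ _ h1
            rwa [M.compl_involutive] at h2
        · intro y hy
          have h1 : M.compl r ≤ M.compl y := M.compl_antitone _ _ (hy (Set.mem_insert _ _))
          have h2 : M.compl q ≤ M.compl y :=
            M.compl_antitone _ _ (hy (Set.mem_insert_of_mem _ rfl))
          have hcy : c ≤ M.compl y := hc.2 (by rintro z (rfl | rfl); exacts [h1, h2])
          have h3 := M.compl_antitone _ _ hcy
          rwa [M.compl_involutive] at h3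
      have hxq : M.compl c ≤ q := hglb.1 (Set.mem_insert_of_mem _ rfl)
      refine ⟨q, rfl, M.compl c, ⟨r, hr, hglb⟩, M.compl c, ?_, ?_⟩
      · constructor
        · rintro y (rfl | rfl)
          · exact hxq
          · exact le_refl _
        · intro y hy _
          exact hy (Set.mem_insert_of_mem _ rfl)
      · have hglb' : IsGLB {r, M.compl (M.compl q)} (M.compl c) := by
          rw [M.compl_involutive]; exact hglb
        exact M.oml (M.compl q) r (M.compl c) hq'r hglb'
  refine ⟨key, ?_, ?_⟩
  · intro r hr
    rw [key] at hr
    exact hr.1 (Set.mem_insert _ _)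
  · rintro b hb
    obtain rfl := (Set.mem_singleton_iff.mp hb).symm
    obtain ⟨r, _, hr⟩ := exists_minimal_le_of_wellFoundedLT
      (P := (· ∈ upperBounds ({p, M.compl q} : Set A))) (a := (⊤ : A))
      (fun y _ => le_top)
    rw [key]
    exact ⟨r, hr, hr.1 (Set.mem_insert _ _)⟩
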